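/- With notation as follows: l càdlàg periodic of period t, U^ε a finite union of open sets each with m-null boundary where m is the occupation measure of l, A^ε_u = ∫_0^u 1_{l(s)∈U^ε} ds and σ^ε its right-continuous inverse. If a decreasing sequence ε_k → 0 is such that m((U^{ε_k})^c) → 0, then σ^{ε_k}_s → s as k → ∞, uniformly on compact subsets of ℝ_+. -/

import Mathlib

open scoped Classical

open Filter Topology MeasureTheory Set

/-- A càdlàg (here: right-continuous) function `ℝ → S` is measurable. -/
lemma measurable_of_rightCts {S : Type*} [MetricSpace S] [MeasurableSpace S] [BorelSpace S]
    (l : ℝ → S) (hrc : ∀ u, Tendsto l (𝓝[>] u) (𝓝 (l u))) : Measurable l := by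
  have hmeas : ∀ n : ℕ, Measurable (fun s : ℝ =>
      (fun z : ℤ => l (((z : ℝ) + 1) / (n + 1 : ℝ))) ⌊s * (n + 1)⌋) := by
    intro n
    have h1 : Measurable (fun s : ℝ => (⌊s * (n + 1)⌋ : ℤ)) :=
      (measurable_id.mul_const _).floor
    exact (measurable_from_top (f := fun z : ℤ => l (((z : ℝ) + 1) / (n + 1 : ℝ)))).comp h1
  apply measurable_of_tendsto_metrizable hmeas
  rw [tendsto_pi_nhds]
  intro s
  apply (hrc s).comp
  have hn1 : ∀ n : ℕ, (0 : ℝ) < n + 1 := fun n => by positivity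
  have hgt : ∀ n : ℕ, s < (((⌊s * (n + 1)⌋ : ℤ) : ℝ) + 1) / (n + 1 : ℝ) := by
    intro n
    rw [lt_div_iff₀ (hn1 n)]
    have := Int.lt_floor_add_one (s * (n + 1))
    push_cast
    linarith
  have hle : ∀ n : ℕ, (((⌊s * (n + 1)⌋ : ℤ) : ℝ) + 1) / (n + 1 : ℝ) ≤ s + 1 / (n + 1) := by
    intro n
    rw [div_le_iff₀ (hn1 n)]
    have := Int.floor_le (s * (n + 1))
    have h2 := (hn1 n).le
    have : (s + 1 / (n + 1)) * (n + 1) = s * (n + 1) + 1 := by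
      field_simp
    push_cast
    nlinarith [Int.floor_le (s * (n + 1))]
  rw [tendsto_nhdsWithin_iff]
  constructor
  · apply tendsto_of_tendsto_of_tendsto_of_le_of_le (g := fun _ => s)
      (h := fun n : ℕ => s + 1 / (n + 1)) tendsto_const_nhds
    · have : Tendsto (fun n : ℕ => s + 1 / (n + 1 : ℝ)) atTop (𝓝 (s + 0)) :=
        tendsto_const_nhds.add tendsto_one_div_add_atTop_nhds_zero_nat
      simpa using this
    · exact fun n => (hgt n).le
    · exact hle
  · exact Eventually.of_forall fun n => hgt n

/-- If `U^{ε_k}` are finite unions of open sets with null boundary for the occupation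
measure `m` of the càdlàg `t`-periodic path `l`, `ε_k ↓ 0` and `m((U^{ε_k})ᶜ) → 0`, then
the right-continuous inverses `σ^{ε_k}` of the occupation times `A^{ε_k}` converge to the
identity uniformly on compact subsets of `ℝ₊`. -/
theorem sigma_tendsto_uniformly_on_compacts
    {S : Type*} [MetricSpace S] [MeasurableSpace S] [BorelSpace S]
    (l : ℝ → S) (t : ℝ) (ht : 0 < t)
    (hper : ∀ s, l (s + t) = l s)
    (hrc : ∀ u, Tendsto l (𝓝[>] u) (𝓝 (l u)))
    (hll : ∀ u, ∃ y, Tendsto l (𝓝[<] u) (𝓝 y))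
    (m : Set S → ℝ) (hm : ∀ B : Set S, m B = ∫ s in (0:ℝ)..t, (if l s ∈ B then (1:ℝ) else 0))
    (ε : ℕ → ℝ) (hεpos : ∀ k, 0 < ε k) (hεanti : StrictAnti ε)
    (hε0 : Tendsto ε atTop (𝓝 0))
    (U : ℕ → Set S)
    (hUopen : ∀ k, ∃ (q : ℕ) (V : Fin q → Set S),
        (∀ i, IsOpen (V i)) ∧ (∀ i, m (frontier (V i)) = 0) ∧ U k = ⋃ i, V i)
    (hUc : ∀ k, m (U k)ᶜ < 2 * ε k)
    (A : ℕ → ℝ → ℝ)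
    (hA : ∀ k u, A k u = ∫ s in (0:ℝ)..u, (if l s ∈ U k then (1:ℝ) else 0))
    (σ : ℕ → ℝ → ℝ)
    (hσ : ∀ k s, σ k s = sInf {u : ℝ | 0 ≤ u ∧ s < A k u}) :
    ∀ K : Set ℝ, IsCompact K → K ⊆ Ici 0 →
      TendstoUniformlyOn (fun k s => σ k s) id atTop K := by
  have hl : Measurable l := measurable_of_rightCts l hrc
  have hmU : ∀ k, MeasurableSet (U k) := by
    intro k
    obtain ⟨q, V, hVopen, -, hUV⟩ := hUopen k
    rw [hUV]
    exact (isOpen_iUnion fun i => hVopen i).measurableSet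
  -- the indicator of `U k` composed with `l`, and its complement version
  set f : ℕ → ℝ → ℝ := fun k s => if l s ∈ U k then (1:ℝ) else 0 with hf
  set g : ℕ → ℝ → ℝ := fun k s => if l s ∈ U k then (0:ℝ) else 1 with hg
  have hfmeas : ∀ k, Measurable (f k) := by
    intro k
    exact Measurable.ite (hl (hmU k)) measurable_const measurable_const
  have hgmeas : ∀ k, Measurable (g k) := by
    intro k
    exact Measurable.ite (hl (hmU k)) measurable_const measurable_const
  have hInt : ∀ (F : ℝ → ℝ), Measurable F → (∀ s, ‖F s‖ ≤ 1) →
      ∀ a b : ℝ, IntervalIntegrable F volume a b := by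
    intro F hF hFb a b
    rw [intervalIntegrable_iff]
    exact (integrableOn_const (C := (1:ℝ)) measure_Ioc_lt_top.ne).mono'
      hF.aestronglyMeasurable.restrict (Eventually.of_forall fun s => hFb s)
  have hfb : ∀ k s, ‖f k s‖ ≤ 1 := by
    intro k s; simp only [hf]; split <;> simp
  have hgb : ∀ k s, ‖g k s‖ ≤ 1 := by
    intro k s; simp only [hg]; split <;> simp
  have hIntf : ∀ k a b, IntervalIntegrable (f k) volume a b :=
    fun k => hInt (f k) (hfmeas k) (hfb k)
  have hIntg : ∀ k a b, IntervalIntegrable (g k) volume a b :=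
    fun k => hInt (g k) (hgmeas k) (hgb k)
  -- A k u ≤ u for u ≥ 0
  have hA_le : ∀ k u, 0 ≤ u → A k u ≤ u := by
    intro k u hu
    rw [hA]
    calc (∫ s in (0:ℝ)..u, (if l s ∈ U k then (1:ℝ) else 0))
        ≤ ∫ _ in (0:ℝ)..u, (1:ℝ) := by
          apply intervalIntegral.integral_mono_on hu (hIntf k 0 u) intervalIntegrable_const
          intro x _
          simp only [hf]
          split <;> norm_num
      _ = u := by simp
  -- m (U k)ᶜ is the integral of g over a period
  have hm_eq : ∀ k, m (U k)ᶜ = ∫ s in (0:ℝ)..t, g k s := by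
    intro k
    rw [hm]
    apply intervalIntegral.integral_congr
    intro s _
    simp only [hg, mem_compl_iff]
    by_cases h : l s ∈ U k <;> simp [h]
  have hm_nonneg : ∀ k, 0 ≤ m (U k)ᶜ := by
    intro k
    rw [hm_eq]
    apply intervalIntegral.integral_nonneg ht.le
    intro s _
    simp only [hg]; split <;> norm_num
  -- g is periodic
  have hgper : ∀ k, Function.Periodic (g k) t := by
    intro k s
    simp only [hg, hper s]
  -- lower bound on A:  u - (u/t + 1) * m (U k)ᶜ ≤ A k u
  have hA_ge : ∀ k u, 0 ≤ u → u - (u / t + 1) * m (U k)ᶜ ≤ A k u := by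
    intro k u hu
    have hfg : ∀ s, g k s = 1 - f k s := by
      intro s; simp only [hf, hg]; split <;> norm_num
    have hsub : (∫ s in (0:ℝ)..u, g k s) = u - A k u := by
      rw [hA]
      calc (∫ s in (0:ℝ)..u, g k s)
          = ∫ s in (0:ℝ)..u, ((1:ℝ) - f k s) := by
            apply intervalIntegral.integral_congr; intro s _; exact hfg s
        _ = (∫ _ in (0:ℝ)..u, (1:ℝ)) - ∫ s in (0:ℝ)..u, f k s :=
            intervalIntegral.integral_sub intervalIntegrable_const (hIntf k 0 u)
        _ = u - ∫ s in (0:ℝ)..u, f k s := by simp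
    set n : ℕ := ⌈u / t⌉₊ with hn
    have hun : u ≤ (n : ℝ) * t := by
      rw [← div_le_iff₀ ht]
      exact Nat.le_ceil _
    have hnle : (n : ℝ) ≤ u / t + 1 := (Nat.ceil_lt_add_one (by positivity)).le
    have hmono : (∫ s in (0:ℝ)..u, g k s) ≤ ∫ s in (0:ℝ)..((n : ℝ) * t), g k s := by
      apply intervalIntegral.integral_mono_interval le_rfl hu hun
      · filter_upwards with s
        simp only [hg]; split <;> norm_num
      · exact hIntg k 0 _
    have hzsmul : (∫ s in (0:ℝ)..((n : ℝ) * t), g k s) = (n : ℝ) * ∫ s in (0:ℝ)..t, g k s := by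
      have := (hgper k).intervalIntegral_add_zsmul_eq (n : ℤ) 0 (hIntg k)
      simpa [zsmul_eq_mul] using this
    have hfinal : u - A k u ≤ (u / t + 1) * m (U k)ᶜ := by
      rw [← hsub]
      calc (∫ s in (0:ℝ)..u, g k s)
          ≤ (n : ℝ) * ∫ s in (0:ℝ)..t, g k s := by rw [← hzsmul]; exact hmono
        _ = (n : ℝ) * m (U k)ᶜ := by rw [hm_eq]
        _ ≤ (u / t + 1) * m (U k)ᶜ := by
            apply mul_le_mul_of_nonneg_right hnle (hm_nonneg k)
    linarith
  -- the key sandwich for σ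
  have key : ∀ k s, 0 ≤ s → m (U k)ᶜ < t →
      s ≤ σ k s ∧ σ k s ≤ (s + m (U k)ᶜ) / (1 - m (U k)ᶜ / t) := by
    intro k s hs hdt
    set d := m (U k)ᶜ with hd
    have hd0 : 0 ≤ d := hm_nonneg k
    have hden : 0 < 1 - d / t := by
      have : d / t < 1 := (div_lt_one ht).2 hdt
      linarith
    set T := {u : ℝ | 0 ≤ u ∧ s < A k u} with hT
    have hmem : ∀ η : ℝ, 0 < η → (s + d + η) / (1 - d / t) ∈ T := by
      intro η hη
      set u := (s + d + η) / (1 - d / t) with hu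
      have hu_eq : u * (1 - d / t) = s + d + η := div_mul_cancel₀ _ hden.ne'
      have hu0 : 0 ≤ u := div_nonneg (by linarith) hden.le
      have h2 := hA_ge k u hu0
      have h3 : u - (u / t + 1) * d = u * (1 - d / t) - d := by ring
      rw [hu_eq] at h3
      constructor
      · exact hu0
      · show s < A k u
        linarith
    have hne : T.Nonempty := ⟨_, hmem 1 one_pos⟩
    have hbdd : BddBelow T := ⟨0, fun u hu => hu.1⟩
    constructor
    · rw [hσ]
      apply le_csInf hne
      intro u hu
      exact (lt_of_lt_of_le hu.2 (hA_le k u hu.1)).le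
    · rw [hσ]
      by_contra hcon
      push_neg at hcon
      set η := (sInf T - (s + d) / (1 - d / t)) / 2 * (1 - d / t) with hη
      have hηpos : 0 < η := by
        apply mul_pos _ hden
        linarith
      have hle := csInf_le hbdd (hmem η hηpos)
      have heq : (s + d + η) / (1 - d / t) = (s + d) / (1 - d / t) + η / (1 - d / t) := by
        ring
      rw [heq] at hle
      have hηdiv : η / (1 - d / t) = (sInf T - (s + d) / (1 - d / t)) / 2 := by
        rw [hη, mul_div_assoc, div_self hden.ne', mul_one]
      rw [hηdiv] at hle
      linarith
  -- final assembly
  intro K hK hK0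
  obtain ⟨M, hM⟩ : ∃ M : ℝ, ∀ s ∈ K, s ≤ M := by
    rcases K.eq_empty_or_nonempty with hKe | hKne
    · exact ⟨0, by simp [hKe]⟩
    · obtain ⟨M, -, hM⟩ := hK.exists_isGreatest hKne
      exact ⟨M, fun s hs => hM hs⟩
  set M0 := max M 0 with hM0
  have hM0nn : (0:ℝ) ≤ M0 := le_max_right _ _
  have hMK : ∀ s ∈ K, s ≤ M0 := fun s hs => (hM s hs).trans (le_max_left _ _)
  rw [Metric.tendstoUniformlyOn_iff]
  intro η hη
  have hq : (0:ℝ) < 1 + M0 / t := by positivity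
  set δ := min (t / 4) (η / (4 * (1 + M0 / t))) with hδ
  have hδpos : 0 < δ := lt_min (by positivity) (by positivity)
  filter_upwards [hε0.eventually (gt_mem_nhds hδpos)] with k hk
  intro s hs
  have hs0 : (0:ℝ) ≤ s := hK0 hs
  have hsM : s ≤ M0 := hMK s hs
  have hdbound : m (U k)ᶜ < 2 * δ := lt_trans (hUc k) (by linarith)
  have hδt : δ ≤ t / 4 := min_le_left _ _
  have hδη : δ ≤ η / (4 * (1 + M0 / t)) := min_le_right _ _
  have hδη' : δ * (4 * (1 + M0 / t)) ≤ η := by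
    rw [← le_div_iff₀ (by positivity)]
    exact hδη
  have hdt : m (U k)ᶜ < t := by linarith
  obtain ⟨h1, h2⟩ := key k s hs0 hdt
  set d := m (U k)ᶜ with hd
  have hd0 : 0 ≤ d := hm_nonneg k
  have hdt2 : d ≤ t / 2 := by linarith
  have hden : (1:ℝ)/2 ≤ 1 - d / t := by
    have : d / t ≤ 1 / 2 := by
      rw [div_le_div_iff₀ ht (by norm_num)]
      linarith
    linarith
  have hdenpos : (0:ℝ) < 1 - d / t := by linarith
  have h2'' : σ k s * (t - d) ≤ (s + d) * t := by
    have h := (le_div_iff₀ hdenpos).mp h2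
    have e : (1 - d / t) * t = t - d := by field_simp
    nlinarith [h]
  have hσ0 : 0 ≤ σ k s := le_trans hs0 h1
  have hσle : σ k s ≤ 2 * (s + d) := by
    nlinarith [mul_nonneg hσ0 (by linarith : (0:ℝ) ≤ t - d - t / 2)]
  have hσd : σ k s * d ≤ 2 * (s + d) * d := mul_le_mul_of_nonneg_right hσle hd0
  have hsd : s * d ≤ M0 * d := mul_le_mul_of_nonneg_right hsM hd0
  have hdd : d * d ≤ (t / 2) * d := mul_le_mul_of_nonneg_right hdt2 hd0
  have hmain : (σ k s - s) * t ≤ 2 * d * (t + M0) := by nlinarith [h2'']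
  have hδη'' : δ * (4 * (t + M0)) ≤ η * t := by
    have h := mul_le_mul_of_nonneg_right hδη' ht.le
    have e : δ * (4 * (1 + M0 / t)) * t = δ * (4 * (t + M0)) := by
      field_simp
    rw [e] at h
    exact h
  have htM0 : (0:ℝ) < t + M0 := by linarith
  have hlast : σ k s - s < η := by
    by_contra hcc
    push_neg at hcc
    have h3 : η * t ≤ (σ k s - s) * t := mul_le_mul_of_nonneg_right hcc ht.le
    have h4 : 2 * d * (t + M0) < 4 * δ * (t + M0) := by
      apply mul_lt_mul_of_pos_right _ htM0
      linarith
    linarith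
  show dist (id s) (σ k s) < η
  simp only [id_eq]
  rw [Real.dist_eq]
  have habs : |s - σ k s| = σ k s - s := by
    rw [abs_of_nonpos (by linarith)]
    ring
  rw [habs]
  exact hlast
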